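/- For distinct positive reals x, y, z and real s with −1 < s < 0, the sum 1/(x^s (x−y)(x−z)) + 1/(y^s (y−z)(y−x)) + 1/(z^s (z−x)(z−y)) is strictly negative. -/
import Mathlib

lemma key_concave (x y z : ℝ) (hz : 0 < z) (hzy : z < y) (hyx : y < x)
    (t : ℝ) (ht0 : 0 < t) (ht1 : t < 1) :
    x ^ t * (y - z) - y ^ t * (x - z) + z ^ t * (x - y) < 0 := by
  have hcon := Real.strictConcaveOn_rpow ht0 ht1
  have hxz : z < x := hzy.trans hyx
  set a : ℝ := (y - z) / (x - z) with ha
  have hxz' : (0:ℝ) < x - z := by linarith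
  have ha0 : 0 < a := div_pos (by linarith) hxz'
  have hb0 : 0 < 1 - a := by
    rw [ha, sub_pos, div_lt_one hxz']; linarith
  have hab : a + (1 - a) = 1 := by ring
  have hne : x ≠ z := by linarith
  have h := hcon.2 (Set.mem_Ici.2 (by linarith : (0:ℝ) ≤ x))
    (Set.mem_Ici.2 hz.le) hne ha0 hb0 hab
  simp only [smul_eq_mul] at h
  have hy : a * x + (1 - a) * z = y := by
    rw [ha]; field_simp; try ring
  rw [hy] at h
  have h2 : a * x ^ t + (1 - a) * z ^ t < y ^ t := h
  have h3 : (x - z) * (a * x ^ t + (1 - a) * z ^ t) < (x - z) * y ^ t :=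
    (mul_lt_mul_iff_right₀ hxz').2 h2
  have e1 : (x - z) * a = y - z := by rw [ha]; field_simp; try ring
  have e2 : (x - z) * (1 - a) = x - y := by rw [ha]; field_simp; try ring
  have h4 : (x - z) * (a * x ^ t + (1 - a) * z ^ t)
      = (y - z) * x ^ t + (x - y) * z ^ t := by
    rw [← e1, ← e2]; ring
  nlinarith [h3, h4]

lemma ordered_case (x y z : ℝ) (hz : 0 < z) (hzy : z < y) (hyx : y < x)
    (s : ℝ) (hs1 : -1 < s) (hs0 : s < 0) :
    1 / (x ^ s * (x - y) * (x - z)) + 1 / (y ^ s * (y - z) * (y - x)) +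
        1 / (z ^ s * (z - x) * (z - y)) < 0 := by
  have hx : 0 < x := hz.trans (hzy.trans hyx)
  have hy : 0 < y := hz.trans hzy
  have hxs : (0:ℝ) < x ^ s := Real.rpow_pos_of_pos hx s
  have hys : (0:ℝ) < y ^ s := Real.rpow_pos_of_pos hy s
  have hzs : (0:ℝ) < z ^ s := Real.rpow_pos_of_pos hz s
  have hxy : x - y ≠ 0 := by intro h; linarith [sub_eq_zero.1 h]
  have hyz : y - z ≠ 0 := by intro h; linarith [sub_eq_zero.1 h]
  have hxz : x - z ≠ 0 := by intro h; linarith [sub_eq_zero.1 h]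
  have hyx' : y - x ≠ 0 := by intro h; linarith [sub_eq_zero.1 h]
  have hzx : z - x ≠ 0 := by intro h; linarith [sub_eq_zero.1 h]
  have hzy' : z - y ≠ 0 := by intro h; linarith [sub_eq_zero.1 h]
  have e : 1 / (x ^ s * (x - y) * (x - z)) + 1 / (y ^ s * (y - z) * (y - x)) +
        1 / (z ^ s * (z - x) * (z - y)) =
      (x ^ (-s) * (y - z) - y ^ (-s) * (x - z) + z ^ (-s) * (x - y)) /
        ((x - y) * (y - z) * (x - z)) := by
    rw [Real.rpow_neg hx.le, Real.rpow_neg hy.le, Real.rpow_neg hz.le]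
    field_simp [hxs.ne', hys.ne', hzs.ne', hxy, hyz, hxz, hyx', hzx, hzy']
    ring
  rw [e]
  apply div_neg_of_neg_of_pos
  · exact key_concave x y z hz hzy hyx (-s) (by linarith) (by linarith)
  · have : 0 < x - y := by linarith
    have : 0 < y - z := by linarith
    have : 0 < x - z := by linarith
    positivity

theorem reciprocal_schur_neg (x y z : ℝ) (hx : 0 < x) (hy : 0 < y) (hz : 0 < z)
    (hxy : x ≠ y) (hyz : y ≠ z) (hxz : x ≠ z) (s : ℝ) (hs1 : -1 < s) (hs0 : s < 0) :
    1 / (x ^ s * (x - y) * (x - z)) + 1 / (y ^ s * (y - z) * (y - x)) +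
        1 / (z ^ s * (z - x) * (z - y)) < 0 := by
  rcases lt_or_gt_of_ne hxy with h1 | h1 <;>
  rcases lt_or_gt_of_ne hyz with h2 | h2 <;>
  rcases lt_or_gt_of_ne hxz with h3 | h3
  · -- x < y, y < z : z > y > x
    have h := ordered_case z y x hx h1 h2 s hs1 hs0
    have e : 1 / (x ^ s * (x - y) * (x - z)) + 1 / (y ^ s * (y - z) * (y - x)) +
        1 / (z ^ s * (z - x) * (z - y)) =
      1 / (z ^ s * (z - y) * (z - x)) + 1 / (y ^ s * (y - x) * (y - z)) +
        1 / (x ^ s * (x - z) * (x - y)) := by ring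
    rw [e]; exact h
  · exact absurd h3 (not_lt.2 (h1.trans h2).le)
  · -- x < y, z < y, x < z : y > z > x
    have h := ordered_case y z x hx h3 h2 s hs1 hs0
    have e : 1 / (x ^ s * (x - y) * (x - z)) + 1 / (y ^ s * (y - z) * (y - x)) +
        1 / (z ^ s * (z - x) * (z - y)) =
      1 / (y ^ s * (y - z) * (y - x)) + 1 / (z ^ s * (z - x) * (z - y)) +
        1 / (x ^ s * (x - y) * (x - z)) := by ring
    rw [e]; exact h
  · -- x < y, z < y, z < x : y > x > z
    have h := ordered_case y x z hz h3 h1 s hs1 hs0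
    have e : 1 / (x ^ s * (x - y) * (x - z)) + 1 / (y ^ s * (y - z) * (y - x)) +
        1 / (z ^ s * (z - x) * (z - y)) =
      1 / (y ^ s * (y - x) * (y - z)) + 1 / (x ^ s * (x - z) * (x - y)) +
        1 / (z ^ s * (z - y) * (z - x)) := by ring
    rw [e]; exact h
  · -- y < x, y < z, x < z : z > x > y
    have h := ordered_case z x y hy h1 h3 s hs1 hs0
    have e : 1 / (x ^ s * (x - y) * (x - z)) + 1 / (y ^ s * (y - z) * (y - x)) +
        1 / (z ^ s * (z - x) * (z - y)) =
      1 / (z ^ s * (z - x) * (z - y)) + 1 / (x ^ s * (x - y) * (x - z)) +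
        1 / (y ^ s * (y - z) * (y - x)) := by ring
    rw [e]; exact h
  · -- y < x, y < z, z < x : x > z > y
    have h := ordered_case x z y hy h2 h3 s hs1 hs0
    have e : 1 / (x ^ s * (x - y) * (x - z)) + 1 / (y ^ s * (y - z) * (y - x)) +
        1 / (z ^ s * (z - x) * (z - y)) =
      1 / (x ^ s * (x - z) * (x - y)) + 1 / (z ^ s * (z - y) * (z - x)) +
        1 / (y ^ s * (y - x) * (y - z)) := by ring
    rw [e]; exact h
  · exact absurd h3 (not_lt.2 (h2.trans h1).le)
  · -- z < y < x
    exact ordered_case x y z hz h2 h1 s hs1 hs0
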